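/- Let β ∈ (1,2) and k ≥ 1. Then β ≤ η_k if and only if (T_1^k ∘ T_0)(1/β) ≤ 1/(2(β−1)), where η_k is the unique root in (1,2) of 2x^{k+1} − 4x^k + 1 = 0, T_0(x) = βx and T_1(x) = βx − 1. -/

import Mathlib

def T0 (β x : ℝ) : ℝ := β * x
def T1 (β x : ℝ) : ℝ := β * x - 1

lemma iter_T1 (β : ℝ) (hβ : β ≠ 1) (k : ℕ) :
    (T1 β)^[k] 1 = ((β-2)*β^k + 1)/(β-1) := by
  have hb : β - 1 ≠ 0 := sub_ne_zero.mpr hβ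
  induction k with
  | zero =>
    simp only [Function.iterate_zero, id_eq, pow_zero, mul_one]
    field_simp
    ring
  | succ n ih =>
    rw [Function.iterate_succ_apply', ih, T1]
    field_simp
    ring

theorem le_eta_iff (β : ℝ) (hβ : β ∈ Set.Ioo (1:ℝ) 2) (k : ℕ) (hk : 1 ≤ k)
    (η : ℝ) (hη : η ∈ Set.Ioo (1:ℝ) 2) (hroot : 2*η^(k+1) - 4*η^k + 1 = 0) :
    β ≤ η ↔ (T1 β)^[k] (T0 β (1/β)) ≤ 1/(2*(β-1)) := by
  obtain ⟨hβ1, hβ2⟩ := hβ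
  obtain ⟨hη1, hη2⟩ := hη
  have hb1 : (0:ℝ) < β - 1 := by linarith
  have hβ0 : (0:ℝ) < β := by linarith
  have hT0 : T0 β (1/β) = 1 := by
    rw [T0]; field_simp
  rw [hT0, iter_T1 β (by linarith) k]
  obtain ⟨m, rfl⟩ : ∃ m, k = m + 1 := ⟨k - 1, by omega⟩
  set g : ℝ → ℝ := fun x => 4*x^(m+1) - 2*x^(m+2) with hg
  have hiff : ((β-2)*β^(m+1) + 1)/(β-1) ≤ 1/(2*(β-1)) ↔ 1 ≤ g β := by
    rw [div_le_div_iff₀ hb1 (by linarith)]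
    have hp : β^(m+2) = β^(m+1) * β := pow_succ β (m+1)
    have hpp : (0:ℝ) < β^(m+1) := pow_pos hβ0 (m+1)
    simp only [hg]
    constructor <;> intro h <;> nlinarith [mul_pos hb1 hpp]
  rw [hiff]
  -- derivative of g
  have hderiv : ∀ x : ℝ, HasDerivAt g (4*(m+1)*x^m - 2*(m+2)*x^(m+1)) x := by
    intro x
    have h1 := (hasDerivAt_pow (m+1) x).const_mul (4:ℝ)
    have h2 := (hasDerivAt_pow (m+2) x).const_mul (2:ℝ)
    have h := h1.sub h2
    simp only [Nat.add_sub_cancel] at h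
    convert h using 1
    · rfl
    · rfl
    · rfl
    · rw [show m + 2 - 1 = m + 1 by omega]
      push_cast
      ring
  have hcont : Continuous g := by
    simp only [hg]; continuity
  set c : ℝ := 2*(m+1)/(m+2) with hcdef
  have hm2 : (0:ℝ) < (m:ℝ) + 2 := by positivity
  have hc1 : 1 ≤ c := by
    rw [hcdef, le_div_iff₀ hm2]; push_cast; linarith
  have hc2 : c < 2 := by
    rw [hcdef, div_lt_iff₀ hm2]; push_cast; linarith
  have hmono : StrictMonoOn g (Set.Icc 1 c) := by
    apply strictMonoOn_of_deriv_pos (convex_Icc _ _) hcont.continuousOn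
    intro x hx
    rw [interior_Icc] at hx
    rw [(hderiv x).deriv]
    have hx0 : (0:ℝ) < x := by linarith [hx.1]
    have hxm : (0:ℝ) < x^m := pow_pos hx0 m
    have hlt : ((m:ℝ)+2)*x < 2*((m:ℝ)+1) := by
      have := hx.2
      rw [hcdef, lt_div_iff₀ hm2] at this
      push_cast at this ⊢
      linarith
    have hp : x^(m+1) = x^m * x := pow_succ x m
    nlinarith [mul_pos hxm (show (0:ℝ) < 2*((m:ℝ)+1) - ((m:ℝ)+2)*x by linarith)]
  have hanti : StrictAntiOn g (Set.Icc c 2) := by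
    apply strictAntiOn_of_deriv_neg (convex_Icc _ _) hcont.continuousOn
    intro x hx
    rw [interior_Icc] at hx
    rw [(hderiv x).deriv]
    have hx0 : (0:ℝ) < x := by linarith [hx.1]
    have hxm : (0:ℝ) < x^m := pow_pos hx0 m
    have hlt : 2*((m:ℝ)+1) < ((m:ℝ)+2)*x := by
      have := hx.1
      rw [hcdef, div_lt_iff₀ hm2] at this
      push_cast at this ⊢
      linarith
    have hp : x^(m+1) = x^m * x := pow_succ x m
    nlinarith [mul_pos hxm (show (0:ℝ) < ((m:ℝ)+2)*x - 2*((m:ℝ)+1) by linarith)]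
  have hg1 : g 1 = 2 := by simp [hg]; norm_num
  have hgη : g η = 1 := by simp only [hg]; linarith
  have hcη : c ≤ η := by
    by_contra h
    push_neg at h
    have := hmono (Set.left_mem_Icc.mpr hc1) ⟨hη1.le, h.le⟩ hη1
    rw [hg1, hgη] at this
    linarith
  constructor
  · intro hle
    rcases le_or_gt β c with h | h
    · have := hmono.monotoneOn (Set.left_mem_Icc.mpr hc1) ⟨hβ1.le, h⟩ hβ1.le
      rw [hg1] at this; linarith
    · have := hanti.antitoneOn ⟨h.le, by linarith⟩ ⟨hcη, hη2.le⟩ hle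
      rw [hgη] at this; linarith
  · intro hgb
    by_contra h
    push_neg at h
    have := hanti ⟨hcη, hη2.le⟩ ⟨by linarith, hβ2.le⟩ h
    rw [hgη] at this; linarith
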